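/- The set {0, 1, 2, i, 1+i, 2+i} ⊆ ℤ[i] is a 5-universal set: every polynomial f with coefficients in the fraction field of ℤ[i] of degree at most 5 satisfying f(0), f(1), f(2), f(i), f(1+i), f(2+i) ∈ ℤ[i] takes values in ℤ[i] at every Gaussian integer. -/

import Mathlib

open Polynomial

/-- The fraction field of the Gaussian integers. -/
abbrev FF : Type := FractionRing GaussianInt

/-- The canonical embedding of `ℤ[i]` into its fraction field. -/
noncomputable def ι : GaussianInt →+* FF := algebraMap GaussianInt FF

/-- A polynomial with coefficients in the fraction field of `ℤ[i]` is integer-valued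
if it takes values in (the image of) `ℤ[i]` at every Gaussian integer. -/
def IntegerValued (f : FF[X]) : Prop :=
  ∀ z : GaussianInt, f.eval (ι z) ∈ Set.range ι

/-- A set `M ⊆ ℤ[i]` is `n`-universal if every polynomial of degree at most `n`
with coefficients in the fraction field of `ℤ[i]` taking integer values on `M`
is integer-valued. -/
def IsNUniversal (n : ℕ) (M : Set GaussianInt) : Prop :=
  ∀ f : FF[X], f.natDegree ≤ n → (∀ c ∈ M, f.eval (ι c) ∈ Set.range ι) → IntegerValued f



def gdec (d w : GaussianInt) : Prop :=
  if d = 0 then w = 0 else d.norm ∣ (star d * w).re ∧ d.norm ∣ (star d * w).im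

lemma gdvd_iff (d w : GaussianInt) (hd : d ≠ 0) :
    d ∣ w ↔ d.norm ∣ (star d * w).re ∧ d.norm ∣ (star d * w).im := by
  rw [← Zsqrtd.intCast_dvd, Zsqrtd.norm_eq_mul_conj]
  constructor
  · rintro ⟨q, rfl⟩; exact ⟨q, by ring⟩
  · rintro ⟨q, hq⟩
    refine ⟨q, ?_⟩
    apply mul_left_cancel₀ (star_ne_zero.mpr hd)
    rw [hq]; ring

lemma gdec_iff (d w : GaussianInt) : d ∣ w ↔ gdec d w := by
  unfold gdec
  split
  · next h => subst h; simp
  · next h => exact gdvd_iff d w h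

instance (d w : GaussianInt) : Decidable (gdec d w) := by unfold gdec; infer_instance

instance (d w : GaussianInt) : Decidable (d ∣ w) :=
  decidable_of_iff' _ (gdec_iff d w)

lemma periodic_dvd (d : GaussianInt) (m : ℕ) (hm : 0 < m)
    (hdm : d ∣ ((m : ℤ) : GaussianInt)) (p : GaussianInt[X])
    (h : ∀ x y : Fin m, d ∣ p.eval ⟨(x : ℤ), (y : ℤ)⟩) (z : GaussianInt) :
    d ∣ p.eval z := by
  have hm' : (0 : ℤ) < m := by exact_mod_cast hm
  set r : GaussianInt := ⟨z.re % m, z.im % m⟩ with hr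
  have h1 : ((m : ℤ) : GaussianInt) ∣ z - r := by
    rw [Zsqrtd.intCast_dvd]
    constructor <;> simp [hr] <;> exact Int.dvd_self_sub_of_emod_eq rfl
  have h2 : z - r ∣ p.eval z - p.eval r := Polynomial.sub_dvd_eval_sub z r p
  have e1 := Int.emod_lt_of_pos z.re hm'
  have e2 := Int.emod_lt_of_pos z.im hm'
  have e3 := Int.emod_nonneg z.re hm'.ne'
  have e4 := Int.emod_nonneg z.im hm'.ne'
  have hx : (z.re % m).toNat < m := by omega
  have hy : (z.im % m).toNat < m := by omega
  have h3 : d ∣ p.eval r := by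
    have := h ⟨(z.re % m).toNat, hx⟩ ⟨(z.im % m).toNat, hy⟩
    simpa [hr, Int.toNat_of_nonneg (Int.emod_nonneg _ hm'.ne')] using this
  have h4 : d ∣ p.eval z - p.eval r := hdm.trans (h1.trans h2)
  simpa using dvd_add h4 h3

def c : Fin 6 → GaussianInt := ![0, 1, 2, ⟨0, 1⟩, ⟨1, 1⟩, ⟨2, 1⟩]

lemma keydvd (k : Fin 6) (z : GaussianInt) :
    (∏ j ∈ Finset.univ.erase k, (c k - c j)) ∣ ∏ j ∈ Finset.univ.erase k, (z - c j) := by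
  have heval : ∀ (k : Fin 6) (w : GaussianInt),
      (∏ j ∈ Finset.univ.erase k, (X - Polynomial.C (c j))).eval w
        = ∏ j ∈ Finset.univ.erase k, (w - c j) := by
    intro k w; simp [Polynomial.eval_prod]
  rw [← heval k z]
  fin_cases k <;>
    exact periodic_dvd _ 20 (by norm_num) (by decide) _
      (by simp only [heval]; decide) z


/-- The set `{0, 1, 2, i, 1 + i, 2 + i}` is a `5`-universal set in `ℤ[i]`. -/
theorem six_point_universal :
    IsNUniversal 5 ({0, 1, 2, ⟨0, 1⟩, ⟨1, 1⟩, ⟨2, 1⟩} : Set GaussianInt) := by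
  intro f hdeg hvals z
  have hinj : Function.Injective ι := IsFractionRing.injective GaussianInt FF
  set v : Fin 6 → FF := fun k => ι (c k) with hv
  have hcinj : Function.Injective c := by decide
  have hvs : Set.InjOn v (Finset.univ : Finset (Fin 6)) := fun i _ j _ h =>
    hcinj (hinj h)
  have hcard : ((Finset.univ : Finset (Fin 6)).card : WithBot ℕ) = 6 := by simp
  have hdeg' : f.degree < (Finset.univ : Finset (Fin 6)).card := by
    rw [hcard]
    refine lt_of_le_of_lt f.degree_le_natDegree ?_
    exact_mod_cast lt_of_le_of_lt hdeg (by norm_num)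
  have hf := Lagrange.eq_interpolate hvs hdeg'
  have hmem : ∀ k : Fin 6, f.eval (v k) ∈ Set.range ι := by
    intro k
    apply hvals
    fin_cases k <;> simp [c] <;> tauto
  choose a ha using hmem
  have hd0 : ∀ k : Fin 6, (∏ j ∈ Finset.univ.erase k, (c k - c j)) ≠ 0 := by decide
  rw [show f.eval (ι z) = (Lagrange.interpolate Finset.univ v fun i => f.eval (v i)).eval (ι z)
      from by rw [← hf]]
  rw [Lagrange.interpolate_apply, Polynomial.eval_finset_sum]
  have : ∀ k ∈ (Finset.univ : Finset (Fin 6)),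
      (Polynomial.C (f.eval (v k)) * Lagrange.basis Finset.univ v k).eval (ι z)
        ∈ ι.range := by
    intro k _
    set E := Finset.univ.erase k with hE
    have hb : (Polynomial.C (f.eval (v k)) * Lagrange.basis Finset.univ v k).eval (ι z)
        = ι (a k) * ((∏ j ∈ E, (v k - v j)⁻¹) * ∏ j ∈ E, (ι z - v j)) := by
      rw [Polynomial.eval_mul, Polynomial.eval_C, ha k, Lagrange.basis,
        Polynomial.eval_prod, ← Finset.prod_mul_distrib]
      congr 1
      refine Finset.prod_congr rfl fun j _ => ?_
      simp [Lagrange.basisDivisor]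
    rw [hb]
    have h1 : ∏ j ∈ E, (v k - v j) = ι (∏ j ∈ E, (c k - c j)) := by
      rw [map_prod]; exact Finset.prod_congr rfl fun j _ => (map_sub ι _ _).symm
    have h2 : ∏ j ∈ E, (ι z - v j) = ι (∏ j ∈ E, (z - c j)) := by
      rw [map_prod]; exact Finset.prod_congr rfl fun j _ => (map_sub ι _ _).symm
    obtain ⟨q, hq⟩ := keydvd k z
    have hDne : ι (∏ j ∈ E, (c k - c j)) ≠ 0 := fun h =>
      hd0 k (hinj (h.trans (map_zero ι).symm))
    rw [Finset.prod_inv_distrib, h1, h2, hq, map_mul,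
      inv_mul_cancel_left₀ hDne]
    exact ⟨a k * q, by rw [map_mul]⟩
  have := Subring.sum_mem ι.range fun k hk => this k hk
  simpa [RingHom.mem_range, Set.range] using this
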